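/- Let W(n) = C_{n+1} (Catalan numbers) and define M(n) = (2·W(n-1) − 3·W(n-2))/W(n) for n ≥ 2. Then M(n) = (n+2)(5n−7)/(4(2n+1)(2n−1)), and M(n) → 5/16 as n → ∞. -/

import Mathlib

/-- `x : Fin n → ℕ` (0-indexed version of `(x_1,…,x_n)`) is a valid n-tuple for the
input sequence `y`: `x_1 ≤ y n` and `x_{j+1} ≤ min (x_j) (y (n - j))` for `1 ≤ j ≤ n-1`. -/
def IsValid (y : ℕ → ℕ) (n : ℕ) (x : Fin n → ℕ) : Prop :=
  (∀ h : 0 < n, x ⟨0, h⟩ ≤ y n) ∧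
  ∀ i : ℕ, ∀ h : i + 1 < n,
    x ⟨i + 1, h⟩ ≤ min (x ⟨i, Nat.lt_of_succ_lt h⟩) (y (n - (i + 1)))

/-- `A y n k` : number of valid n-tuples whose first entry equals `k`. -/
noncomputable def A (y : ℕ → ℕ) (n k : ℕ) : ℕ :=
  Nat.card {x : Fin n → ℕ // IsValid y n x ∧ ∀ h : 0 < n, x ⟨0, h⟩ = k}

/-- `W y n` : total number of valid n-tuples. -/
noncomputable def W (y : ℕ → ℕ) (n : ℕ) : ℕ :=
  Nat.card {x : Fin n → ℕ // IsValid y n x}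

lemma cat_rec (k : ℕ) : (k + 2) * catalan (k + 1) = 2 * (2 * k + 1) * catalan k := by
  have h2 : (k + 2) * catalan (k + 1) = Nat.centralBinom (k + 1) :=
    succ_mul_catalan_eq_centralBinom (k + 1)
  have h1 : (k + 1) * catalan k = Nat.centralBinom k :=
    succ_mul_catalan_eq_centralBinom k
  have h3 := Nat.succ_mul_centralBinom_succ k
  have : (k + 1) * ((k + 2) * catalan (k + 1)) = (k + 1) * (2 * (2 * k + 1) * catalan k) := by
    rw [h2, h3, ← h1]; ring
  exact Nat.eq_of_mul_eq_mul_left (Nat.succ_pos k) this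

lemma cat_recR (k : ℕ) : ((k : ℝ) + 2) * catalan (k + 1) = 2 * (2 * k + 1) * catalan k := by
  exact_mod_cast cat_rec k

lemma cat_pos (k : ℕ) : 0 < catalan k := by
  rcases Nat.eq_zero_or_pos (catalan k) with h0 | h
  · have h := succ_mul_catalan_eq_centralBinom k
    rw [h0, mul_zero] at h
    exact absurd h.symm (Nat.centralBinom_pos k).ne'
  · exact h

lemma cat_posR (k : ℕ) : (0 : ℝ) < catalan k := by exact_mod_cast cat_pos k

lemma part1 : ∀ n : ℕ, 2 ≤ n →
      (2 * (catalan n : ℝ) - 3 * (catalan (n - 1) : ℝ)) / (catalan (n + 1) : ℝ) =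
        ((n : ℝ) + 2) * (5 * n - 7) / (4 * (2 * n + 1) * (2 * n - 1)) := by
  intro n hn
  obtain ⟨m, rfl⟩ : ∃ m, n = m + 2 := ⟨n - 2, by omega⟩
  have e1 : m + 2 - 1 = m + 1 := by omega
  rw [e1]
  have h1 := cat_recR (m + 1)
  have h2 := cat_recR (m + 2)
  have hc3 := cat_posR (m + 2 + 1)
  push_cast at h1 h2 ⊢
  set x := (m : ℝ)
  have hx : (0:ℝ) ≤ x := Nat.cast_nonneg m
  have hd : (4 * (2 * (x + 2) + 1) * (2 * (x + 2) - 1)) ≠ 0 := by nlinarith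
  have hd3 : (2 * (x + 2) - 1) ≠ 0 := by nlinarith
  have hd4 : (2 * (x + 2) + 1) ≠ 0 := by nlinarith
  field_simp
  ring_nf
  ring_nf at h1 h2
  nlinarith [h1, h2, mul_pos (cat_posR (m+1)) (cat_posR (m+2)), cat_posR (m+1), cat_posR (m+2), hc3]

theorem stmt18 :
    (∀ n : ℕ, 2 ≤ n →
      (2 * (catalan n : ℝ) - 3 * (catalan (n - 1) : ℝ)) / (catalan (n + 1) : ℝ) =
        ((n : ℝ) + 2) * (5 * n - 7) / (4 * (2 * n + 1) * (2 * n - 1))) ∧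
    Filter.Tendsto
      (fun n : ℕ => (2 * (catalan n : ℝ) - 3 * (catalan (n - 1) : ℝ)) / (catalan (n + 1) : ℝ))
      Filter.atTop (nhds (5 / 16)) := by
  refine ⟨part1, ?_⟩
  have hg : Filter.Tendsto
      (fun n : ℕ => ((n : ℝ) + 2) * (5 * n - 7) / (4 * (2 * n + 1) * (2 * n - 1)))
      Filter.atTop (nhds (5 / 16)) := by
    have h0 : Filter.Tendsto (fun n : ℕ => 1 / (n : ℝ)) Filter.atTop (nhds 0) :=
      tendsto_one_div_atTop_nhds_zero_nat
    have hcont : ContinuousAt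
        (fun x : ℝ => (1 + 2 * x) * (5 - 7 * x) / (4 * (2 + x) * (2 - x))) 0 := by
      apply ContinuousAt.div
      · fun_prop
      · fun_prop
      · norm_num
    have := hcont.tendsto.comp h0
    have h516 : (1 + 2 * (0:ℝ)) * (5 - 7 * 0) / (4 * (2 + 0) * (2 - 0)) = 5 / 16 := by norm_num
    rw [h516] at this
    apply this.congr'
    filter_upwards [Filter.eventually_ge_atTop 1] with n hn
    have hn0 : (n : ℝ) ≠ 0 := Nat.cast_ne_zero.mpr (by omega)
    have hn1 : (1:ℝ) ≤ (n:ℝ) := by exact_mod_cast hn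
    have hd1 : (2 * (n:ℝ) + 1) ≠ 0 := by nlinarith
    have hd2 : (2 * (n:ℝ) - 1) ≠ 0 := by nlinarith
    simp only [Function.comp]
    field_simp
  exact hg.congr' (by
    filter_upwards [Filter.eventually_ge_atTop 2] with n hn
    exact (part1 n hn).symm)
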